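/- (Splitting a Minimal Homotopy, part 3.) Let γ₁, γ₂, γ₃ : [0,1] → ℂ be continuous paths with common endpoints such that the range of γ₂ is Lebesgue-null, let H₁ be a homotopy from γ₁ to γ₂ and H₂ a homotopy from γ₂ to γ₃ with Area(H₁ + H₂) = σ(γ₁, γ₃) < ∞. If H₂′ is another minimum homotopy from γ₂ to γ₃, i.e. Area(H₂′) = σ(γ₂, γ₃), then H₁ + H₂′ is also minimum: Area(H₁ + H₂′) = σ(γ₁, γ₃). -/

import Mathlib

open MeasureTheory unitInterval ENNReal

noncomputable section

/-- `homE H p` is the number of connected components of the fiber `H⁻¹({p})`,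
as an extended natural number. -/
def homE {a b : ℂ} {γ₁ γ₂ : Path a b} (H : Path.Homotopy γ₁ γ₂) (p : ℂ) : ℕ∞ :=
  ENat.card (ConnectedComponents ↥(⇑H ⁻¹' {p}))

/-- The homotopy area `Area(H) = ∫⁻ x, E_H(x)`. -/
def homArea {a b : ℂ} {γ₁ γ₂ : Path a b} (H : Path.Homotopy γ₁ γ₂) : ℝ≥0∞ :=
  ∫⁻ p, (homE H p : ℝ≥0∞)

/-- The minimum homotopy area `sg(γ₁, γ₂)`, the infimum of `Area(H)` over all
homotopies rel endpoints from `γ₁` to `γ₂`. -/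
def minHomArea {a b : ℂ} (γ₁ γ₂ : Path a b) : ℝ≥0∞ :=
  ⨅ H : Path.Homotopy γ₁ γ₂, homArea H

section Aux

open Set Topology TopologicalSpace

section CC
variable {X Y : Type*} [TopologicalSpace X] [TopologicalSpace Y]

/-- A homeomorphism induces an equivalence on connected components. -/
def ccEquivOfHomeo (h : X ≃ₜ Y) : ConnectedComponents X ≃ ConnectedComponents Y where
  toFun := h.continuous.connectedComponentsMap
  invFun := h.symm.continuous.connectedComponentsMap
  left_inv := ConnectedComponents.surjective_coe.forall.2 fun x => by
    simp only [Continuous.connectedComponentsMap, Continuous.connectedComponentsLift_apply_coe,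
      ContinuousMap.coe_coe, Function.comp_apply, Homeomorph.symm_apply_apply]
  right_inv := ConnectedComponents.surjective_coe.forall.2 fun y => by
    simp only [Continuous.connectedComponentsMap, Continuous.connectedComponentsLift_apply_coe,
      ContinuousMap.coe_coe, Function.comp_apply, Homeomorph.apply_symm_apply]

/-- Connected components of a sum. -/
def ccSumEquiv : ConnectedComponents (X ⊕ Y) ≃ (ConnectedComponents X ⊕ ConnectedComponents Y) where
  toFun := (Continuous.sumMap ConnectedComponents.continuous_coe
    ConnectedComponents.continuous_coe).connectedComponentsLift
  invFun := Sum.elim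
    (ConnectedComponents.continuous_coe.comp continuous_inl).connectedComponentsLift
    (ConnectedComponents.continuous_coe.comp continuous_inr).connectedComponentsLift
  left_inv := ConnectedComponents.surjective_coe.forall.2 fun w => by cases w <;> rfl
  right_inv := by
    rintro (c | c)
    · obtain ⟨x, rfl⟩ := ConnectedComponents.surjective_coe c; rfl
    · obtain ⟨x, rfl⟩ := ConnectedComponents.surjective_coe c; rfl

theorem cardCC_congr (h : X ≃ₜ Y) :
    ENat.card (ConnectedComponents X) = ENat.card (ConnectedComponents Y) :=
  ENat.card_congr (ccEquivOfHomeo h)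

theorem cardCC_sum :
    ENat.card (ConnectedComponents (X ⊕ Y)) =
      ENat.card (ConnectedComponents X) + ENat.card (ConnectedComponents Y) := by
  rw [ENat.card_congr ccSumEquiv, ENat.card_sum]

end CC


universe u

/-- Lower bound on the number of connected components from an open partition. -/
lemma le_cardCC_of_partition {F : Type u} [TopologicalSpace F] {m : ℕ}
    {V : Fin m → Set F} (hop : ∀ i, IsOpen (V i))
    (hdisj : Pairwise (Function.onFun Disjoint V)) (hcov : (⋃ i, V i) = univ)
    (hne : ∀ i, (V i).Nonempty) :
    (m : ℕ∞) ≤ ENat.card (ConnectedComponents F) := by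
  classical
  have hex : ∀ x : F, ∃ i, x ∈ V i := fun x => by
    have : x ∈ ⋃ i, V i := hcov ▸ mem_univ x
    simpa using this
  let g : F → Fin m := fun x => (hex x).choose
  have hgmem : ∀ x, x ∈ V (g x) := fun x => (hex x).choose_spec
  have hg : ∀ x i, x ∈ V i → g x = i := by
    intro x i hxi
    by_contra hne'
    exact Set.disjoint_left.1 (hdisj hne') (hgmem x) hxi
  have hfib : ∀ i, g ⁻¹' {i} = V i := by
    intro i
    ext x
    constructor
    · intro hx
      have : g x = i := hx
      exact this ▸ hgmem x
    · exact fun hx => hg x i hx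
  have hgc : Continuous g := by
    refine IsLocallyConstant.continuous (IsLocallyConstant.iff_isOpen_fiber.2 fun i => ?_)
    rw [hfib]
    exact hop i
  have hgs : Function.Surjective g := fun i => by
    obtain ⟨x, hx⟩ := hne i
    exact ⟨x, hg x i hx⟩
  have hls : Function.Surjective hgc.connectedComponentsLift := by
    intro i
    obtain ⟨x, hx⟩ := hgs i
    exact ⟨x, hx⟩
  obtain ⟨ch, hch⟩ := hls.hasRightInverse
  show (m : ℕ∞) ≤ Cardinal.toENat (Cardinal.mk (ConnectedComponents F))
  refine Cardinal.natCast_le_toENat_iff.2 ?_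
  have hm' : ((m : ℕ) : Cardinal) = Cardinal.mk (ULift.{u} (Fin m)) := by simp
  rw [hm']
  exact Cardinal.mk_le_of_injective (f := fun i => ch i.down)
    (hch.injective.comp (fun a b hab => ULift.ext a b hab))

/-- From a lower bound on the number of components of a compact Hausdorff space,
extract a clopen partition. -/
lemma partition_of_le_cardCC {F : Type u} [TopologicalSpace F] [CompactSpace F] [T2Space F]
    {m : ℕ} (hm : m ≠ 0) (h : (m : ℕ∞) ≤ ENat.card (ConnectedComponents F)) :
    ∃ P : Fin m → Set F, (∀ i, IsClopen (P i)) ∧ Pairwise (Function.onFun Disjoint P) ∧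
      (⋃ i, P i) = univ ∧ ∀ i, (P i).Nonempty := by
  classical
  haveI : NeZero m := ⟨hm⟩
  have hcard : (m : Cardinal) ≤ Cardinal.mk (ConnectedComponents F) :=
    Cardinal.natCast_le_toENat_iff.1 h
  have hm' : ((m : ℕ) : Cardinal) = Cardinal.mk (ULift.{u} (Fin m)) := by simp
  rw [hm', Cardinal.le_def] at hcard
  obtain ⟨φ₀⟩ := hcard
  let φ : Fin m → ConnectedComponents F := fun i => φ₀ ⟨i⟩
  have hφinj : Function.Injective φ := fun a b hab => congrArg ULift.down (φ₀.injective hab)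
  have hrep : ∀ i : Fin m, ∃ x : F, (x : ConnectedComponents F) = φ i := fun i =>
    ConnectedComponents.surjective_coe (φ i)
  choose x hx using hrep
  have hxne : ∀ i j : Fin m, i ≠ j → x j ∉ connectedComponent (x i) := by
    intro i j hij hmem
    apply hij
    apply hφinj
    rw [← hx i, ← hx j]
    exact ConnectedComponents.coe_eq_coe.2 (connectedComponent_eq hmem)
  have hsep : ∀ i j : Fin m, ∃ U : Set F, IsClopen U ∧ x i ∈ U ∧ (j ≠ i → x j ∉ U) := by
    intro i j
    by_cases hij : j = i
    · exact ⟨univ, isClopen_univ, mem_univ _, fun hc => absurd hij hc⟩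
    · have hnm : x j ∉ connectedComponent (x i) := hxne i j (Ne.symm hij)
      rw [connectedComponent_eq_iInter_isClopen] at hnm
      simp only [mem_iInter, Subtype.forall, not_forall] at hnm
      obtain ⟨U, hU, hUn⟩ := hnm
      exact ⟨U, hU.1, hU.2, fun _ => hUn⟩
  choose W hWc hWm hWn using hsep
  set Q : Fin m → Set F := fun i => ⋂ j, W i j with hQ
  have hQc : ∀ i, IsClopen (Q i) := fun i => isClopen_iInter_of_finite (hWc i)
  have hQm : ∀ i, x i ∈ Q i := fun i => mem_iInter.2 (hWm i)
  have hQn : ∀ i j, j ≠ i → x j ∉ Q i := fun i j hij hmem => hWn i j hij (mem_iInter.1 hmem j)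
  set R : Fin m → Set F := fun i => Q i \ ⋃ j ∈ {j | j < i}, Q j with hR
  have hRc : ∀ i, IsClopen (R i) :=
    fun i => (hQc i).diff (Set.Finite.isClopen_biUnion (Set.toFinite _) fun j _ => hQc j)
  have hRQ : ∀ i, R i ⊆ Q i := fun i => diff_subset
  have hRd : ∀ i j : Fin m, i < j → Disjoint (R i) (R j) := by
    intro i j hij
    rw [Set.disjoint_left]
    intro y hyi hyj
    exact hyj.2 (mem_biUnion hij (hRQ i hyi))
  have hRm : ∀ i, x i ∈ R i := by
    intro i
    refine ⟨hQm i, ?_⟩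
    intro hmem
    obtain ⟨j, hji, hmem⟩ := by simpa using hmem
    exact hQn j i (ne_of_gt hji) hmem
  set P : Fin m → Set F := fun i => if i = 0 then R i ∪ (⋃ j, Q j)ᶜ else R i with hP
  have hPc : ∀ i, IsClopen (P i) := by
    intro i
    show IsClopen (if i = 0 then R i ∪ (⋃ j, Q j)ᶜ else R i)
    by_cases h0 : i = 0
    · rw [if_pos h0]; exact (hRc i).union (isClopen_iUnion_of_finite hQc).compl
    · rw [if_neg h0]; exact hRc i
  have hPd : Pairwise (Function.onFun Disjoint P) := by
    intro i j hij
    have key : ∀ i j : Fin m, i < j → Disjoint (P i) (P j) := by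
      intro i j hij
      have hj0 : j ≠ 0 := by
        intro hj; rw [hj] at hij; exact absurd hij (by simp)
      have hPj : P j = R j := if_neg hj0
      by_cases h0 : i = 0
      · have hPi : P i = R i ∪ (⋃ k, Q k)ᶜ := if_pos h0
        rw [hPi, hPj]
        refine Disjoint.union_left ?_ ?_
        · exact h0 ▸ hRd i j hij
        · rw [Set.disjoint_left]
          intro y hy hyj
          exact hy (mem_iUnion.2 ⟨j, hRQ j hyj⟩)
      · have hPi : P i = R i := if_neg h0
        rw [hPi, hPj]
        exact hRd i j hij
    rcases lt_or_gt_of_ne hij with h | h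
    · exact key i j h
    · exact (key j i h).symm
  have hPcov : (⋃ i, P i) = univ := by
    apply eq_univ_of_forall
    intro y
    by_cases hy : y ∈ ⋃ j, Q j
    · set S : Finset (Fin m) := Finset.univ.filter (fun j => y ∈ Q j) with hS
      have hSne : S.Nonempty := by
        obtain ⟨j, hj⟩ := mem_iUnion.1 hy
        exact ⟨j, by simp [hS, hj]⟩
      set j₀ := S.min' hSne with hj₀
      have hyj₀ : y ∈ Q j₀ := by
        have := S.min'_mem hSne
        simp only [hS, Finset.mem_filter] at this
        exact this.2
      have hymin : ∀ k, k < j₀ → y ∉ Q k := by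
        intro k hk hyk
        have : j₀ ≤ k := S.min'_le k (by simp [hS, hyk])
        exact absurd hk (not_lt.2 this)
      have hyR : y ∈ R j₀ := by
        refine ⟨hyj₀, ?_⟩
        intro hmem
        obtain ⟨k, hk, hmem⟩ := by simpa using hmem
        exact hymin k hk hmem
      refine mem_iUnion.2 ⟨j₀, ?_⟩
      show y ∈ (if j₀ = 0 then R j₀ ∪ (⋃ j, Q j)ᶜ else R j₀)
      by_cases h0 : j₀ = 0
      · rw [if_pos h0]; exact Or.inl hyR
      · rw [if_neg h0]; exact hyR
    · refine mem_iUnion.2 ⟨0, ?_⟩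
      show y ∈ (if (0 : Fin m) = 0 then R 0 ∪ (⋃ j, Q j)ᶜ else R 0)
      rw [if_pos rfl]
      exact Or.inr hy
  have hPne : ∀ i, (P i).Nonempty := by
    intro i
    refine ⟨x i, ?_⟩
    show x i ∈ (if i = 0 then R i ∪ (⋃ j, Q j)ᶜ else R i)
    by_cases h0 : i = 0
    · rw [if_pos h0]; exact Or.inl (hRm i)
    · rw [if_neg h0]; exact hRm i
  exact ⟨P, hPc, hPd, hPcov, hPne⟩

/-- Refine a compact subset of an open set by a finite union of basic open sets. -/
lemma exists_finite_basis_cover {K : Type*} [TopologicalSpace K] [SecondCountableTopology K]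
    {C W : Set K} (hC : IsCompact C) (hW : IsOpen W) (hCW : C ⊆ W) :
    ∃ s : Set (Set K), s.Finite ∧ s ⊆ countableBasis K ∧ C ⊆ ⋃₀ s ∧ ⋃₀ s ⊆ W := by
  have hcov : C ⊆ ⋃ b : {b // b ∈ countableBasis K ∧ b ⊆ W}, b.1 := by
    intro x hx
    obtain ⟨v, hvB, hxv, hvW⟩ :=
      (isBasis_countableBasis K).exists_subset_of_mem_open (hCW hx) hW
    exact mem_iUnion.2 ⟨⟨v, hvB, hvW⟩, hxv⟩
  obtain ⟨t, ht⟩ := hC.elim_finite_subcover _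
    (fun b : {b // b ∈ countableBasis K ∧ b ⊆ W} => (isBasis_countableBasis K).isOpen b.2.1) hcov
  refine ⟨(fun b : {b // b ∈ countableBasis K ∧ b ⊆ W} => b.1) '' ↑t,
    t.finite_toSet.image _, ?_, ?_, ?_⟩
  · rintro v ⟨b, _, rfl⟩
    exact b.2.1
  · intro x hx
    obtain ⟨b, hbt, hxb⟩ := mem_iUnion₂.1 (ht hx)
    exact ⟨b.1, mem_image_of_mem _ hbt, hxb⟩
  · rintro x ⟨v, ⟨b, _, rfl⟩, hxv⟩
    exact b.2.2 hxv

/-- The image of an open set under a continuous map from a compact metric space is measurable. -/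
lemma measurableSet_image_isOpen {K : Type*} [MetricSpace K] [CompactSpace K]
    {f : K → ℂ} (hf : Continuous f) {V : Set K} (hV : IsOpen V) :
    MeasurableSet (f '' V) := by
  by_cases hV' : V = univ
  · rw [hV', image_univ]
    exact (isCompact_range hf).isClosed.measurableSet
  · have hVc : (Vᶜ : Set K).Nonempty := by
      rw [nonempty_compl]; exact hV'
    have hdecomp : V = ⋃ n : ℕ, {x : K | 1 / (n + 1 : ℝ) ≤ Metric.infDist x Vᶜ} := by
      ext x
      constructor
      · intro hx
        have hpos : 0 < Metric.infDist x Vᶜ :=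
          (hV.isClosed_compl.notMem_iff_infDist_pos hVc).1 (by simpa using hx)
        obtain ⟨n, hn⟩ := exists_nat_one_div_lt hpos
        exact mem_iUnion.2 ⟨n, le_of_lt hn⟩
      · intro hx
        obtain ⟨n, hn⟩ := mem_iUnion.1 hx
        by_contra hxV
        have h0 : Metric.infDist x Vᶜ = 0 := Metric.infDist_zero_of_mem (by simpa using hxV)
        have hn' : 1 / (n + 1 : ℝ) ≤ Metric.infDist x Vᶜ := hn
        rw [h0] at hn'
        have hpos : (0:ℝ) < 1 / (n+1:ℝ) := by positivity
        linarith
    rw [hdecomp, image_iUnion]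
    refine MeasurableSet.iUnion fun n => ?_
    have hclosed : IsClosed {x : K | 1 / (n + 1 : ℝ) ≤ Metric.infDist x Vᶜ} :=
      isClosed_le continuous_const (Metric.continuous_infDist_pt _)
    exact ((hclosed.isCompact.image hf).isClosed).measurableSet

theorem measurableSet_le_cardCC {K : Type u} [MetricSpace K] [CompactSpace K]
    [SecondCountableTopology K] {f : K → ℂ} (hf : Continuous f) {m : ℕ} (hm : m ≠ 0) :
    MeasurableSet {p : ℂ | (m : ℕ∞) ≤ ENat.card (ConnectedComponents ↥(f ⁻¹' {p}))} := by
  classical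
  set T : Set (Set (Set K)) := {t : Set (Set K) | t.Finite ∧ t ⊆ countableBasis K} with hT
  haveI : Countable ↥T :=
    (Set.countable_setOf_finite_subset (countable_countableBasis K)).to_subtype
  have hTopen : ∀ sg : Fin m → ↥T, ∀ i, IsOpen (⋃₀ (sg i : Set (Set K))) := fun sg i =>
    isOpen_sUnion fun v hv => (isBasis_countableBasis K).isOpen ((sg i).2.2 hv)
  have hkey : {p : ℂ | (m : ℕ∞) ≤ ENat.card (ConnectedComponents ↥(f ⁻¹' {p}))} =
      ⋃ (sg : Fin m → ↥T)
        (_ : Pairwise (Function.onFun Disjoint (fun i => ⋃₀ (sg i : Set (Set K))))),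
        ((f '' (⋃ i, ⋃₀ (sg i : Set (Set K)))ᶜ)ᶜ ∩
          ⋂ i, f '' ⋃₀ (sg i : Set (Set K))) := by
    ext p
    simp only [mem_setOf_eq, mem_iUnion, mem_inter_iff, mem_iInter, mem_compl_iff]
    constructor
    · intro hcard
      haveI : CompactSpace ↥(f ⁻¹' {p}) :=
        isCompact_iff_compactSpace.mp (isClosed_singleton.preimage hf).isCompact
      obtain ⟨P, hPc, hPd, hPcov, hPne⟩ := partition_of_le_cardCC hm hcard
      set C : Fin m → Set K := fun i => Subtype.val '' P i with hC
      have hCcomp : ∀ i, IsCompact (C i) :=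
        fun i => ((hPc i).isClosed.isCompact).image continuous_subtype_val
      have hCdisj : Pairwise (Function.onFun Disjoint C) := fun i j hij =>
        Set.disjoint_image_of_injective Subtype.val_injective (hPd hij)
      have hCun : (⋃ i, C i) = f ⁻¹' {p} := by
        rw [hC]
        simp only [← image_iUnion, hPcov, image_univ, Subtype.range_coe]
      have hCne : ∀ i, (C i).Nonempty := fun i => (hPne i).image _
      -- separate the compacts by disjoint open sets
      have hsep : ∀ i j : Fin m, ∃ U U' : Set K, IsOpen U ∧ IsOpen U' ∧
          C i ⊆ U ∧ C j ⊆ U' ∧ (i ≠ j → Disjoint U U') := by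
        intro i j
        by_cases hij : i = j
        · exact ⟨univ, univ, isOpen_univ, isOpen_univ, subset_univ _, subset_univ _,
            fun hc => absurd hij hc⟩
        · obtain ⟨U, U', hU, hU', hCU, hCU', hUU'⟩ :=
            SeparatedNhds.of_isCompact_isCompact (hCcomp i) (hCcomp j) (hCdisj hij)
          exact ⟨U, U', hU, hU', hCU, hCU', fun _ => hUU'⟩
      choose A A' hAop hA'op hCA hCA' hAA' using hsep
      set W : Fin m → Set K := fun i => (⋂ j, A i j) ∩ ⋂ j, A' j i with hW
      have hWop : ∀ i, IsOpen (W i) :=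
        fun i => (isOpen_iInter_of_finite (hAop i)).inter
          (isOpen_iInter_of_finite fun j => hA'op j i)
      have hCW : ∀ i, C i ⊆ W i := fun i =>
        subset_inter (subset_iInter fun j => hCA i j) (subset_iInter fun j => hCA' j i)
      have hWdisj : Pairwise (Function.onFun Disjoint W) := by
        intro i j hij
        refine Disjoint.mono ?_ ?_ (hAA' i j hij)
        · exact (inter_subset_left).trans (iInter_subset _ j)
        · exact (inter_subset_right).trans (iInter_subset _ i)
      -- refine by basic open sets
      have href : ∀ i, ∃ s : Set (Set K), s.Finite ∧ s ⊆ countableBasis K ∧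
          C i ⊆ ⋃₀ s ∧ ⋃₀ s ⊆ W i := fun i =>
        exists_finite_basis_cover (hCcomp i) (hWop i) (hCW i)
      choose s hsfin hsB hCs hsW using href
      refine ⟨fun i => ⟨s i, hsfin i, hsB i⟩, ?_, ?_, ?_⟩
      · intro i j hij
        exact Disjoint.mono (hsW i) (hsW j) (hWdisj hij)
      · -- p not in the image of the complement
        rintro ⟨x, hxc, hxp⟩
        have hxF : x ∈ f ⁻¹' {p} := by simpa using hxp
        rw [← hCun] at hxF
        obtain ⟨i, hxi⟩ := mem_iUnion.1 hxF
        exact hxc (mem_iUnion.2 ⟨i, hCs i hxi⟩)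
      · -- p is in each image
        intro i
        obtain ⟨y, hy⟩ := hPne i
        exact ⟨(y : K), hCs i (mem_image_of_mem _ hy), y.2⟩
    · rintro ⟨sg, hdisj, hcov, hmeet⟩
      set V : Fin m → Set ↥(f ⁻¹' {p}) := fun i => Subtype.val ⁻¹' ⋃₀ (sg i : Set (Set K))
        with hV
      refine le_cardCC_of_partition (V := V) ?_ ?_ ?_ ?_
      · exact fun i => (hTopen sg i).preimage continuous_subtype_val
      · exact fun i j hij => Disjoint.preimage _ (hdisj hij)
      · apply eq_univ_of_forall
        intro x
        have hx : (x : K) ∈ ⋃ i, ⋃₀ (sg i : Set (Set K)) := by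
          by_contra hxc
          exact hcov ⟨x, hxc, x.2⟩
        obtain ⟨i, hi⟩ := mem_iUnion.1 hx
        exact mem_iUnion.2 ⟨i, hi⟩
      · intro i
        obtain ⟨x, hxV, hxp⟩ := hmeet i
        exact ⟨⟨x, hxp⟩, hxV⟩
  rw [hkey]
  refine MeasurableSet.iUnion fun sg => MeasurableSet.iUnion fun _ => ?_
  refine MeasurableSet.inter ?_ (MeasurableSet.iInter fun i =>
    measurableSet_image_isOpen hf (hTopen sg i))
  refine (MeasurableSet.compl ?_)
  have hcl : IsClosed (⋃ i, ⋃₀ (sg i : Set (Set K)))ᶜ :=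
    (isOpen_iUnion fun i => hTopen sg i).isClosed_compl
  exact ((hcl.isCompact.image hf).isClosed).measurableSet

lemma coe_enat_eq_tsum (e : ℕ∞) :
    (e : ℝ≥0∞) = ∑' n : ℕ, if ((n + 1 : ℕ) : ℕ∞) ≤ e then 1 else 0 := by
  classical
  induction e using ENat.recTopCoe with
  | top =>
    rw [ENat.toENNReal_top]
    rw [tsum_congr (fun n => if_pos le_top)]
    exact (ENNReal.tsum_const_eq_top_of_ne_zero one_ne_zero).symm
  | coe k =>
    rw [ENat.toENNReal_coe]
    have h1 : ∀ n : ℕ, (if ((n + 1 : ℕ) : ℕ∞) ≤ (k : ℕ∞) then (1:ℝ≥0∞) else 0)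
        = if n < k then (1:ℝ≥0∞) else 0 := by
      intro n
      have hc : (((n + 1 : ℕ) : ℕ∞) ≤ (k : ℕ∞)) ↔ n < k := by rw [Nat.cast_le]; omega
      exact if_congr hc rfl rfl
    calc (k : ℝ≥0∞) = ∑ n ∈ Finset.range k, (1:ℝ≥0∞) := by simp
      _ = ∑ n ∈ Finset.range k, (if n < k then (1:ℝ≥0∞) else 0) :=
          Finset.sum_congr rfl (fun n hn => (if_pos (Finset.mem_range.1 hn)).symm)
      _ = ∑' n : ℕ, (if n < k then (1:ℝ≥0∞) else 0) :=
          (tsum_eq_sum (fun n hn => if_neg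
            (by simp only [Finset.mem_range] at hn; exact hn))).symm
      _ = ∑' n : ℕ, (if ((n + 1 : ℕ) : ℕ∞) ≤ (k : ℕ∞) then (1:ℝ≥0∞) else 0) :=
          tsum_congr (fun n => (h1 n).symm)

theorem measurable_coe_cardCC {K : Type u} [MetricSpace K] [CompactSpace K]
    [SecondCountableTopology K] {f : K → ℂ} (hf : Continuous f) :
    Measurable fun p : ℂ =>
      ((ENat.card (ConnectedComponents ↥(f ⁻¹' {p})) : ℕ∞) : ℝ≥0∞) := by
  classical
  have heq : (fun p : ℂ => ((ENat.card (ConnectedComponents ↥(f ⁻¹' {p})) : ℕ∞) : ℝ≥0∞)) =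
      fun p : ℂ => ∑' n : ℕ,
        if ((n + 1 : ℕ) : ℕ∞) ≤ ENat.card (ConnectedComponents ↥(f ⁻¹' {p})) then 1 else 0 :=
    funext fun p => coe_enat_eq_tsum _
  rw [heq]
  refine Measurable.ennreal_tsum fun n => ?_
  exact Measurable.ite (measurableSet_le_cardCC hf (Nat.succ_ne_zero n))
    measurable_const measurable_const


theorem homE_trans {a b : ℂ} {γ₁ γ₂ γ₃ : Path a b}
    (H₁ : Path.Homotopy γ₁ γ₂) (H₂ : Path.Homotopy γ₂ γ₃) {p : ℂ}
    (hp : p ∉ Set.range γ₂) :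
    homE (H₁.trans H₂) p = homE H₁ p + homE H₂ p := by
  -- the two half fibers avoid s = 1 resp. s = 0
  have h1 : ∀ x : ↥(⇑H₁ ⁻¹' {p}), (x.1.1 : ℝ) < 1 := by
    rintro ⟨⟨s, t⟩, hx⟩
    rcases lt_or_eq_of_le s.2.2 with h | h
    · exact h
    · exfalso
      apply hp
      have hs : s = 1 := Subtype.ext (by simpa using h)
      have hx' : H₁ (s, t) = p := hx
      rw [hs, H₁.apply_one] at hx'
      exact ⟨t, hx'⟩
  have h0 : ∀ x : ↥(⇑H₂ ⁻¹' {p}), (0 : ℝ) < x.1.1 := by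
    rintro ⟨⟨s, t⟩, hx⟩
    rcases lt_or_eq_of_le s.2.1 with h | h
    · exact h
    · exfalso
      apply hp
      have hs : s = 0 := Subtype.ext (by simpa using h.symm)
      have hx' : H₂ (s, t) = p := hx
      rw [hs, H₂.apply_zero] at hx'
      exact ⟨t, hx'⟩
  -- the equivalence of fibers
  let e : (↥(⇑H₁ ⁻¹' {p}) ⊕ ↥(⇑H₂ ⁻¹' {p})) ≃ ↥(⇑(H₁.trans H₂) ⁻¹' {p}) := by
    refine Equiv.ofBijective (Sum.elim
      (fun x => ⟨(⟨(x.1.1 : ℝ) / 2, ⟨by linarith [x.1.1.2.1], by linarith [x.1.1.2.2]⟩⟩, x.1.2), ?_⟩)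
      (fun x => ⟨(⟨((x.1.1 : ℝ) + 1) / 2, ⟨by linarith [x.1.1.2.1], by linarith [x.1.1.2.2]⟩⟩,
        x.1.2), ?_⟩)) ⟨?_, ?_⟩
    · -- left membership
      have hx := x.2
      simp only [mem_preimage, mem_singleton_iff] at hx ⊢
      rw [Path.Homotopy.trans_apply]
      rw [dif_pos (by linarith [x.1.1.2.2] : ((x.1.1 : ℝ) / 2) ≤ 1 / 2)]
      convert hx using 2
      ext
      · show 2 * ((x.1.1 : ℝ) / 2) = x.1.1; ring
      · rfl
    · -- right membership
      have hx := x.2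
      have hpos : (0 : ℝ) < x.1.1 := h0 x
      simp only [mem_preimage, mem_singleton_iff] at hx ⊢
      rw [Path.Homotopy.trans_apply]
      rw [dif_neg (by push_neg; linarith : ¬ (((x.1.1 : ℝ) + 1) / 2 ≤ 1 / 2))]
      convert hx using 2
      ext
      · show 2 * (((x.1.1 : ℝ) + 1) / 2) - 1 = x.1.1; ring
      · rfl
    · -- injective
      rintro (x | x) (y | y) hxy <;>
        simp only [Sum.elim_inl, Sum.elim_inr, Subtype.mk_eq_mk, Prod.mk.injEq,
          Subtype.mk_eq_mk] at hxy
      · rcases hxy with ⟨hs, ht⟩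
        congr 1
        refine Subtype.ext (Prod.ext (Subtype.ext ?_) ht)
        show (x.1.1 : ℝ) = y.1.1
        have : (x.1.1 : ℝ)/2 = y.1.1/2 := congrArg Subtype.val hs; linarith
      · exfalso
        have hs : (x.1.1 : ℝ)/2 = (y.1.1 + 1)/2 := congrArg Subtype.val hxy.1
        have := h1 x; have := h0 y
        have hx2 := x.1.1.2.2
        linarith
      · exfalso
        have hs : ((x.1.1 : ℝ)+1)/2 = y.1.1/2 := congrArg Subtype.val hxy.1
        have := h0 x; have := h1 y
        linarith [y.1.1.2.2]
      · rcases hxy with ⟨hs, ht⟩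
        congr 1
        refine Subtype.ext (Prod.ext (Subtype.ext ?_) ht)
        show (x.1.1 : ℝ) = y.1.1
        have : ((x.1.1 : ℝ)+1)/2 = (y.1.1+1)/2 := congrArg Subtype.val hs; linarith
    · -- surjective
      rintro ⟨⟨u, t⟩, hy⟩
      simp only [mem_preimage, mem_singleton_iff, Path.Homotopy.trans_apply] at hy
      by_cases h : (u : ℝ) ≤ 1 / 2
      · rw [dif_pos h] at hy
        refine ⟨Sum.inl ⟨(⟨2 * (u:ℝ), (unitInterval.mul_pos_mem_iff zero_lt_two).2
          ⟨u.2.1, h⟩⟩, t), hy⟩, Subtype.ext (Prod.ext (Subtype.ext ?_) rfl)⟩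
        show (2 * (u:ℝ)) / 2 = u; ring
      · rw [dif_neg h] at hy
        refine ⟨Sum.inr ⟨(⟨2 * (u:ℝ) - 1, unitInterval.two_mul_sub_one_mem_iff.2
          ⟨(not_le.1 h).le, u.2.2⟩⟩, t), hy⟩, Subtype.ext (Prod.ext (Subtype.ext ?_) rfl)⟩
        show (2 * (u:ℝ) - 1 + 1) / 2 = u; ring
  have hcont : Continuous e := by
    apply Continuous.sumElim <;> fun_prop
  have hcomp1 : CompactSpace ↥(⇑H₁ ⁻¹' {p}) :=
    isCompact_iff_compactSpace.mp ((isClosed_singleton.preimage H₁.continuous).isCompact)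
  have hcomp2 : CompactSpace ↥(⇑H₂ ⁻¹' {p}) :=
    isCompact_iff_compactSpace.mp ((isClosed_singleton.preimage H₂.continuous).isCompact)
  have h := Continuous.homeoOfEquivCompactToT2 (f := e) hcont
  calc homE (H₁.trans H₂) p
      = ENat.card (ConnectedComponents (↥(⇑H₁ ⁻¹' {p}) ⊕ ↥(⇑H₂ ⁻¹' {p}))) :=
        (cardCC_congr h).symm
    _ = homE H₁ p + homE H₂ p := cardCC_sum


/-- `homE` is measurable. -/
theorem measurable_homE {a b : ℂ} {γ₁ γ₂ : Path a b} (H : Path.Homotopy γ₁ γ₂) :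
    Measurable fun p => ((homE H p : ℕ∞) : ℝ≥0∞) :=
  measurable_coe_cardCC H.continuous

/-- Additivity of the homotopy area over concatenation when the middle path is null. -/
theorem homArea_trans {a b : ℂ} {γ₁ γ₂ γ₃ : Path a b}
    (G : Path.Homotopy γ₁ γ₂) (G' : Path.Homotopy γ₂ γ₃)
    (hnull : volume (Set.range γ₂) = 0) :
    homArea (G.trans G') = homArea G + homArea G' := by
  have hae : ∀ᵐ p : ℂ, p ∉ Set.range ⇑γ₂ := measure_eq_zero_iff_ae_notMem.1 hnull
  have h1 : (fun p => ((homE (G.trans G') p : ℕ∞) : ℝ≥0∞)) =ᵐ[volume]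
      fun p => ((homE G p : ℕ∞) : ℝ≥0∞) + ((homE G' p : ℕ∞) : ℝ≥0∞) := by
    filter_upwards [hae] with p hp
    rw [homE_trans G G' hp, ENat.toENNReal_add]
  rw [homArea, lintegral_congr_ae h1, lintegral_add_left (measurable_homE G)]
  rfl

end Aux

/-- Splitting a minimal homotopy, part 3: replacing the second sub-homotopy of a minimum
concatenated homotopy by any other minimum homotopy again yields a minimum homotopy. -/
theorem stmt_8 {a b : ℂ} (γ₁ γ₂ γ₃ : Path a b)
    (H₁ : Path.Homotopy γ₁ γ₂) (H₂ H₂' : Path.Homotopy γ₂ γ₃)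
    (hnull : volume (Set.range γ₂) = 0)
    (hmin : homArea (H₁.trans H₂) = minHomArea γ₁ γ₃)
    (hfin : minHomArea γ₁ γ₃ < ⊤)
    (hmin' : homArea H₂' = minHomArea γ₂ γ₃) :
    homArea (H₁.trans H₂') = minHomArea γ₁ γ₃ := by
  have hA : homArea (H₁.trans H₂) = homArea H₁ + homArea H₂ := homArea_trans H₁ H₂ hnull
  have hA' : homArea (H₁.trans H₂') = homArea H₁ + homArea H₂' := homArea_trans H₁ H₂' hnull
  have h2 : minHomArea γ₂ γ₃ ≤ homArea H₂ := iInf_le _ H₂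
  apply le_antisymm
  · rw [hA']
    calc homArea H₁ + homArea H₂' = homArea H₁ + minHomArea γ₂ γ₃ := by rw [hmin']
      _ ≤ homArea H₁ + homArea H₂ := add_le_add_right h2 _
      _ = minHomArea γ₁ γ₃ := by rw [← hA, hmin]
  · exact le_trans (iInf_le _ (H₁.trans H₂')) le_rfl
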